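/- With the notation of the codimension-m pointwise algebra for a vector-valued second fundamental form (see context), for every real c₀ with c₀ > 1/n the following identity holds: c₀·|⟨A,H⟩|² − |⟨A,A⟩|² − |R⊥|² = (2/(nc₀−1))·‖Â‖²·f + (nc₀/(nc₀−1))·‖ḣ‖²·f + (1/(nc₀−1))·f² + 2·( 2‖ḣ‖²‖Â‖² − |ḣ·Â|² − |R⊥(ν₁)|² ) + ( (3/2)‖Â‖⁴ − |⟨Â,Â⟩|² − |R̂⊥|² ) + ( 1/(nc₀−1) − 3/2 )·‖Â‖⁴ + ( nc₀/(nc₀−1) − 4 )·‖ḣ‖²·‖Â‖². -/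

import Mathlib

open Finset
open scoped RealInnerProductSpace

private lemma euclid_sum_apply {n m : ℕ} (g : Fin n → EuclideanSpace ℝ (Fin m)) (β : Fin m) :
    (∑ k, g k) β = ∑ k, g k β := by
  induction (Finset.univ : Finset (Fin n)) using Finset.cons_induction with
  | empty => simp
  | cons a s ha ih => rw [Finset.sum_cons, Finset.sum_cons, PiLp.add_apply, ih]

private lemma euclid_inner {m : ℕ} (x y : EuclideanSpace ℝ (Fin m)) :
    ⟪x, y⟫ = ∑ i, x i * y i := by
  simp [PiLp.inner_apply, RCLike.inner_apply, conj_trivial]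
  exact Finset.sum_congr rfl fun _ _ => mul_comm _ _

private lemma euclid_norm_sq {m : ℕ} (x : EuclideanSpace ℝ (Fin m)) :
    ‖x‖ ^ 2 = ∑ i, x i ^ 2 := by
  rw [← real_inner_self_eq_norm_sq, euclid_inner]
  simp [sq]

private lemma expand_lemma {m : ℕ} (ν S : Fin m → ℝ) (T : Fin m → Fin m → ℝ)
    (hν : ∑ α, ν α ^ 2 = 1) (hS : ∑ α, ν α * S α = 0)
    (hT1 : ∀ β, ∑ α, ν α * T α β = 0) (hT2 : ∀ α, ∑ β, ν β * T α β = 0) :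
    ∑ α, ∑ β, (ν α * S β - ν β * S α + T α β) ^ 2
      = 2 * (∑ α, S α ^ 2) + ∑ α, ∑ β, T α β ^ 2 := by
  have step1 : ∀ α : Fin m, ∑ β, (ν α * S β - ν β * S α + T α β) ^ 2
      = ν α ^ 2 * (∑ β, S β ^ 2) + S α ^ 2 + (∑ β, T α β ^ 2)
        + 2 * ∑ β, (S β * (ν α * T α β)) := by
    intro α
    have e : ∀ β, (ν α * S β - ν β * S α + T α β) ^ 2
        = ν α ^ 2 * S β ^ 2 + S α ^ 2 * ν β ^ 2 + T α β ^ 2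
          + 2 * (S β * (ν α * T α β)) - 2 * (S α * (ν β * T α β))
          - 2 * ((ν α * S α) * (ν β * S β)) := fun β => by ring
    simp only [e]
    rw [Finset.sum_sub_distrib, Finset.sum_sub_distrib, Finset.sum_add_distrib,
      Finset.sum_add_distrib, Finset.sum_add_distrib]
    simp only [← Finset.mul_sum]
    rw [hν, hT2, hS]
    ring
  simp only [step1]
  rw [Finset.sum_add_distrib, Finset.sum_add_distrib, Finset.sum_add_distrib,
    ← Finset.sum_mul, hν, ← Finset.mul_sum]
  rw [Finset.sum_comm (f := fun α β => S β * (ν α * T α β))]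
  have : ∀ β : Fin m, ∑ α, S β * (ν α * T α β) = 0 := fun β => by
    rw [← Finset.mul_sum, hT1, mul_zero]
  simp only [this, Finset.sum_const_zero, mul_zero, add_zero]
  ring

set_option maxHeartbeats 1000000 in
/-- The reaction-term identity from Appendix B.1 of the paper, governing the
preservation of `c₀`-pinching under mean curvature flow: for a vector-valued
second fundamental form `A` in codimension `m` with mean curvature `H ≠ 0`,
principal normal `ν = H/‖H‖`, principal part `h`, tracefree principal part `ḣ`,
and complementary part `Â`,
`c₀|⟨A,H⟩|² − |⟨A,A⟩|² − |R⊥|²` decomposes as stated. -/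
theorem stmt_12 (n m : ℕ) (hn : 2 ≤ n) (hm : 1 ≤ m)
    (c₀ : ℝ) (hc₀ : 1 / (n : ℝ) < c₀)
    (A : Fin n → Fin n → EuclideanSpace ℝ (Fin m))
    (hA : ∀ i j, A i j = A j i)
    (H : EuclideanSpace ℝ (Fin m)) (hHdef : H = ∑ i, A i i) (hH0 : H ≠ 0)
    (ν : EuclideanSpace ℝ (Fin m)) (hν : ν = ‖H‖⁻¹ • H)
    (h : Fin n → Fin n → ℝ) (hh : ∀ i j, h i j = ⟪A i j, ν⟫)
    (h' : Fin n → Fin n → ℝ)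
    (hh' : ∀ i j, h' i j = h i j - (‖H‖ / (n : ℝ)) * (if i = j then 1 else 0))
    (Ahat : Fin n → Fin n → EuclideanSpace ℝ (Fin m))
    (hAhat : ∀ i j, Ahat i j = A i j - (h i j) • ν)
    (normA2 : ℝ) (hnormA2 : normA2 = ∑ i, ∑ j, ‖A i j‖ ^ 2)
    (normAhat2 : ℝ) (hnormAhat2 : normAhat2 = ∑ i, ∑ j, ‖Ahat i j‖ ^ 2)
    (normh'2 : ℝ) (hnormh'2 : normh'2 = ∑ i, ∑ j, (h' i j) ^ 2)
    (f : ℝ) (hf : f = c₀ * ‖H‖ ^ 2 - normA2)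
    (AH2 : ℝ) (hAH2 : AH2 = ∑ i, ∑ j, ⟪A i j, H⟫ ^ 2)
    (AA2 : ℝ) (hAA2 : AA2 = ∑ i, ∑ j, ∑ p, ∑ q, ⟪A i j, A p q⟫ ^ 2)
    (AhatAhat2 : ℝ)
    (hAhatAhat2 : AhatAhat2 = ∑ i, ∑ j, ∑ p, ∑ q, ⟪Ahat i j, Ahat p q⟫ ^ 2)
    (Rperp2 : ℝ)
    (hRperp2 : Rperp2 = ∑ i, ∑ j, ∑ α, ∑ β,
      (∑ k, (A i k α * A j k β - A j k α * A i k β)) ^ 2)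
    (Rhatperp2 : ℝ)
    (hRhatperp2 : Rhatperp2 = ∑ i, ∑ j, ∑ α, ∑ β,
      (∑ k, (Ahat i k α * Ahat j k β - Ahat j k α * Ahat i k β)) ^ 2)
    (Rperpν2 : ℝ)
    (hRperpν2 : Rperpν2 = ∑ i, ∑ j,
      ‖∑ k, ((h' i k) • (Ahat j k) - (h' j k) • (Ahat i k))‖ ^ 2)
    (hdotAhat2 : ℝ)
    (hhdotAhat2 : hdotAhat2 = ‖∑ i, ∑ j, (h' i j) • (Ahat i j)‖ ^ 2) :
    c₀ * AH2 - AA2 - Rperp2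
      = (2 / ((n : ℝ) * c₀ - 1)) * normAhat2 * f
        + ((n : ℝ) * c₀ / ((n : ℝ) * c₀ - 1)) * normh'2 * f
        + (1 / ((n : ℝ) * c₀ - 1)) * f ^ 2
        + 2 * (2 * normh'2 * normAhat2 - hdotAhat2 - Rperpν2)
        + ((3 / 2) * normAhat2 ^ 2 - AhatAhat2 - Rhatperp2)
        + (1 / ((n : ℝ) * c₀ - 1) - 3 / 2) * normAhat2 ^ 2
        + ((n : ℝ) * c₀ / ((n : ℝ) * c₀ - 1) - 4) * normh'2 * normAhat2 := by
  have hn0 : (n : ℝ) ≠ 0 := Nat.cast_ne_zero.mpr (by omega)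
  have hnormH : ‖H‖ ≠ 0 := norm_ne_zero_iff.mpr hH0
  have hνν : ⟪ν, ν⟫ = (1 : ℝ) := by
    rw [hν, real_inner_smul_left, real_inner_smul_right, real_inner_self_eq_norm_sq]
    field_simp
  have hHν : ⟪H, ν⟫ = ‖H‖ := by
    rw [hν, real_inner_smul_right, real_inner_self_eq_norm_sq]
    field_simp
  have horth : ∀ i j, ⟪Ahat i j, ν⟫ = 0 := by
    intro i j
    rw [hAhat, inner_sub_left, real_inner_smul_left, hνν, hh]
    ring
  have hAsplit : ∀ i j, A i j = h i j • ν + Ahat i j := by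
    intro i j; rw [hAhat]; abel
  have hhsymm : ∀ i j, h i j = h j i := fun i j => by rw [hh, hh, hA]
  have hAhatsymm : ∀ i j, Ahat i j = Ahat j i := fun i j => by
    rw [hAhat, hAhat, hA i j, hhsymm i j]
  have htrh : ∑ i, h i i = ‖H‖ := by
    simp only [hh]
    rw [← sum_inner, ← hHdef, hHν]
  have htrh' : ∑ i, h' i i = 0 := by
    simp only [hh', if_true]
    rw [Finset.sum_sub_distrib, htrh, Finset.sum_const, Finset.card_univ, Fintype.card_fin]
    rw [nsmul_eq_mul]
    field_simp
    ring
  have htrAhat : ∑ i, Ahat i i = 0 := by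
    simp only [hAhat]
    rw [Finset.sum_sub_distrib, ← hHdef, ← Finset.sum_smul, htrh, hν, smul_smul]
    rw [mul_inv_cancel₀ hnormH, one_smul, sub_self]
  have hinnerAA : ∀ i j p q, ⟪A i j, A p q⟫ = h i j * h p q + ⟪Ahat i j, Ahat p q⟫ := by
    intro i j p q
    rw [hAsplit i j, hAsplit p q]
    simp only [inner_add_left, inner_add_right, real_inner_smul_left, real_inner_smul_right, hνν]
    rw [real_inner_comm (Ahat p q) ν, horth, horth]
    ring
  have hnormsplit : ∀ i j, ‖A i j‖ ^ 2 = h i j ^ 2 + ‖Ahat i j‖ ^ 2 := by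
    intro i j
    rw [← real_inner_self_eq_norm_sq, ← real_inner_self_eq_norm_sq, hinnerAA, sq]
  have hAHinner : ∀ i j, ⟪A i j, H⟫ = ‖H‖ * h i j := by
    intro i j
    rw [hh, hν, real_inner_smul_right]
    field_simp
  have hhe : ∀ i j, h i j = h' i j + (‖H‖ / n) * (if i = j then 1 else 0) := by
    intro i j; rw [hh']; ring
  have hsumh : ∑ i, ∑ j, h i j ^ 2 = normh'2 + ‖H‖ ^ 2 / n := by
    have e : ∀ i j, h i j ^ 2 = h' i j ^ 2
        + (if i = j then 2 * (‖H‖ / n) * h' i j else 0)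
        + (if i = j then (‖H‖ / n) ^ 2 else 0) := by
      intro i j
      rw [hhe i j]
      by_cases hij : i = j <;> simp [hij] <;> ring
    simp only [e, Finset.sum_add_distrib, Finset.sum_ite_eq, Finset.mem_univ, if_true]
    rw [hnormh'2]
    rw [← Finset.mul_sum, htrh', Finset.sum_const, Finset.card_univ, Fintype.card_fin]
    rw [nsmul_eq_mul]
    field_simp
    ring
  have hAH2v : AH2 = ‖H‖ ^ 2 * (normh'2 + ‖H‖ ^ 2 / n) := by
    rw [hAH2, ← hsumh]
    simp only [hAHinner, mul_pow, ← Finset.mul_sum]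
  have hnormA2v : normA2 = normh'2 + ‖H‖ ^ 2 / n + normAhat2 := by
    rw [hnormA2, hnormAhat2]
    simp only [hnormsplit, Finset.sum_add_distrib, hsumh]
  have hBeq : ∑ i, ∑ j, h i j • Ahat i j = ∑ i, ∑ j, h' i j • Ahat i j := by
    have e : ∀ i j : Fin n, h i j • Ahat i j
        = h' i j • Ahat i j + (if i = j then (‖H‖ / n) • Ahat i j else 0) := by
      intro i j
      rw [hhe i j]
      by_cases hij : i = j <;> simp [hij, add_smul]
    simp only [e, Finset.sum_add_distrib, Finset.sum_ite_eq, Finset.mem_univ, if_true]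
    rw [← Finset.smul_sum, htrAhat, smul_zero, add_zero]
  have hmid : ∑ i, ∑ j, ∑ p, ∑ q, (h i j * h p q * ⟪Ahat i j, Ahat p q⟫) = hdotAhat2 := by
    have : ∑ i, ∑ j, ∑ p, ∑ q, (h i j * h p q * ⟪Ahat i j, Ahat p q⟫)
        = ⟪∑ i, ∑ j, h i j • Ahat i j, ∑ p, ∑ q, h p q • Ahat p q⟫ := by
      rw [sum_inner]
      refine Finset.sum_congr rfl fun i _ => ?_
      rw [sum_inner]
      refine Finset.sum_congr rfl fun j _ => ?_
      rw [inner_sum]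
      refine Finset.sum_congr rfl fun p _ => ?_
      rw [inner_sum]
      refine Finset.sum_congr rfl fun q _ => ?_
      rw [real_inner_smul_left, real_inner_smul_right]
      ring
    rw [this, hBeq, hhdotAhat2, real_inner_self_eq_norm_sq, sq]
  have hAA2v : AA2 = (normh'2 + ‖H‖ ^ 2 / n) ^ 2 + 2 * hdotAhat2 + AhatAhat2 := by
    rw [hAA2, hAhatAhat2, ← hsumh, ← hmid]
    have e : ∀ i j p q : Fin n, ⟪A i j, A p q⟫ ^ 2
        = h i j ^ 2 * h p q ^ 2 + 2 * (h i j * h p q * ⟪Ahat i j, Ahat p q⟫)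
          + ⟪Ahat i j, Ahat p q⟫ ^ 2 := by
      intro i j p q
      rw [hinnerAA]
      ring
    simp only [e, Finset.sum_add_distrib]
    have e2 : ∑ i, ∑ j, ∑ p, ∑ q, (h i j ^ 2 * h p q ^ 2)
        = (∑ i, ∑ j, h i j ^ 2) ^ 2 := by
      simp only [← Finset.mul_sum]
      rw [sq, Finset.sum_mul]
      refine Finset.sum_congr rfl fun i _ => ?_
      rw [Finset.sum_mul]
    rw [e2]
    simp only [← Finset.mul_sum]
  have hνcoord : ∑ α, ν α ^ 2 = 1 := by
    have h1 := hνν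
    rw [euclid_inner] at h1
    simpa [sq] using h1
  have horthcoord : ∀ p q, ∑ α, ν α * Ahat p q α = 0 := by
    intro p q
    have h1 := horth p q
    rw [euclid_inner] at h1
    calc ∑ α, ν α * Ahat p q α = ∑ α, Ahat p q α * ν α :=
          Finset.sum_congr rfl fun α _ => mul_comm _ _
      _ = 0 := h1
  have hcompA : ∀ i j α, A i j α = h i j * ν α + Ahat i j α := by
    intro i j α
    rw [hAhat]
    simp [PiLp.sub_apply, PiLp.smul_apply, smul_eq_mul]
  set Sc : Fin n → Fin n → Fin m → ℝ :=
    fun i j β => ∑ k, (h' i k * Ahat j k β - h' j k * Ahat i k β) with hSc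
  have hRν : Rperpν2 = ∑ i, ∑ j, ∑ β, (Sc i j β) ^ 2 := by
    rw [hRperpν2]
    refine Finset.sum_congr rfl fun i _ => Finset.sum_congr rfl fun j _ => ?_
    rw [euclid_norm_sq]
    refine Finset.sum_congr rfl fun β _ => ?_
    rw [euclid_sum_apply]
    simp only [PiLp.sub_apply, PiLp.smul_apply, smul_eq_mul, hSc]
  have hScsum : ∀ i j β, ∑ k, (h i k * Ahat j k β - h j k * Ahat i k β) = Sc i j β := by
    intro i j β
    have e : ∀ k : Fin n, h i k * Ahat j k β - h j k * Ahat i k β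
        = (h' i k * Ahat j k β - h' j k * Ahat i k β)
          + ((if i = k then (‖H‖ / n) * Ahat j k β else 0)
            - (if j = k then (‖H‖ / n) * Ahat i k β else 0)) := by
      intro k
      rw [hhe i k, hhe j k]
      by_cases h1 : i = k <;> by_cases h2 : j = k <;> simp [h1, h2] <;> ring
    simp only [e, Finset.sum_add_distrib, Finset.sum_sub_distrib, Finset.sum_ite_eq,
      Finset.mem_univ, if_true]
    rw [hAhatsymm j i, hSc, sub_self, add_zero, ← Finset.sum_sub_distrib]
  have hScOrth : ∀ i j, ∑ α, ν α * Sc i j α = 0 := by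
    intro i j
    simp only [hSc, Finset.mul_sum]
    rw [Finset.sum_comm]
    refine Finset.sum_eq_zero fun k _ => ?_
    have e : ∑ α, ν α * (h' i k * Ahat j k α - h' j k * Ahat i k α)
        = h' i k * (∑ α, ν α * Ahat j k α) - h' j k * (∑ α, ν α * Ahat i k α) := by
      rw [Finset.mul_sum, Finset.mul_sum, ← Finset.sum_sub_distrib]
      exact Finset.sum_congr rfl fun α _ => by ring
    rw [e, horthcoord, horthcoord]
    ring
  have hT1 : ∀ i j β, ∑ α, ν α * (∑ k, (Ahat i k α * Ahat j k β - Ahat j k α * Ahat i k β)) = 0 := by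
    intro i j β
    simp only [Finset.mul_sum]
    rw [Finset.sum_comm]
    refine Finset.sum_eq_zero fun k _ => ?_
    have e : ∑ α, ν α * (Ahat i k α * Ahat j k β - Ahat j k α * Ahat i k β)
        = (∑ α, ν α * Ahat i k α) * Ahat j k β - (∑ α, ν α * Ahat j k α) * Ahat i k β := by
      rw [Finset.sum_mul, Finset.sum_mul, ← Finset.sum_sub_distrib]
      exact Finset.sum_congr rfl fun α _ => by ring
    rw [e, horthcoord, horthcoord]
    ring
  have hT2 : ∀ i j α, ∑ β, ν β * (∑ k, (Ahat i k α * Ahat j k β - Ahat j k α * Ahat i k β)) = 0 := by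
    intro i j α
    simp only [Finset.mul_sum]
    rw [Finset.sum_comm]
    refine Finset.sum_eq_zero fun k _ => ?_
    have e : ∑ β, ν β * (Ahat i k α * Ahat j k β - Ahat j k α * Ahat i k β)
        = Ahat i k α * (∑ β, ν β * Ahat j k β) - Ahat j k α * (∑ β, ν β * Ahat i k β) := by
      rw [Finset.mul_sum, Finset.mul_sum, ← Finset.sum_sub_distrib]
      exact Finset.sum_congr rfl fun β _ => by ring
    rw [e, horthcoord, horthcoord]
    ring
  have hkey : ∀ i j, ∑ α, ∑ β, (∑ k, (A i k α * A j k β - A j k α * A i k β)) ^ 2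
      = 2 * (∑ β, (Sc i j β) ^ 2)
        + ∑ α, ∑ β, (∑ k, (Ahat i k α * Ahat j k β - Ahat j k α * Ahat i k β)) ^ 2 := by
    intro i j
    have hsummand : ∀ α β, ∑ k, (A i k α * A j k β - A j k α * A i k β)
        = ν α * Sc i j β - ν β * Sc i j α
          + ∑ k, (Ahat i k α * Ahat j k β - Ahat j k α * Ahat i k β) := by
      intro α β
      rw [← hScsum i j β, ← hScsum i j α]
      simp only [Finset.mul_sum, ← Finset.sum_sub_distrib, ← Finset.sum_add_distrib]
      refine Finset.sum_congr rfl fun k _ => ?_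
      rw [hcompA i k α, hcompA j k β, hcompA j k α, hcompA i k β]
      ring
    simp only [hsummand]
    exact expand_lemma ν (Sc i j)
      (fun α β => ∑ k, (Ahat i k α * Ahat j k β - Ahat j k α * Ahat i k β))
      hνcoord (hScOrth i j) (hT1 i j) (hT2 i j)
  have hRperp2v : Rperp2 = 2 * Rperpν2 + Rhatperp2 := by
    rw [hRperp2, hRhatperp2, hRν]
    simp only [hkey, Finset.sum_add_distrib, ← Finset.mul_sum]
  have hD : (n : ℝ) * c₀ - 1 ≠ 0 := by
    have hnpos : (0 : ℝ) < n := by exact_mod_cast (by omega : 0 < n)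
    rw [div_lt_iff₀ hnpos] at hc₀
    have h1 : 1 < (n : ℝ) * c₀ := by rw [mul_comm]; exact hc₀
    exact sub_ne_zero.mpr (ne_of_gt h1)
  rw [hAH2v, hAA2v, hRperp2v, hf, hnormA2v]
  generalize hDD : (n : ℝ) * c₀ - 1 = D at hD ⊢
  have hc : c₀ = (D + 1) / n := by rw [← hDD]; field_simp; ring
  subst hc
  field_simp
  ring
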